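/- Let v₁, v₂ ∈ ℝⁿ, let A and Y be real matrices indexed by pairs (a,r) with 1 ≤ a ≤ n and 1 ≤ r ≤ m, and let r₁, s₁, r₂, s₂ ∈ {1,…,m}. For a matrix M indexed by such pairs, define the n×n block M^{(r,s)} by (M^{(r,s)})_{ab} = M_{(a,r),(b,s)}. Then Tr((v₁v₁ᵀ ⊗ E^{r₁s₁}) · A · (v₂v₂ᵀ ⊗ E^{r₂s₂}) · Y) = ¼ [ (v₁ᵀ A^{(s₁,r₂)} v₂)(v₂ᵀ Y^{(s₂,r₁)} v₁) + (v₁ᵀ A^{(r₁,r₂)} v₂)(v₂ᵀ Y^{(s₂,s₁)} v₁) + (v₁ᵀ A^{(s₁,s₂)} v₂)(v₂ᵀ Y^{(r₂,r₁)} v₁) + (v₁ᵀ A^{(r₁,s₂)} v₂)(v₂ᵀ Y^{(r₂,s₁)} v₁) ]. -/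

import Mathlib

open Matrix Kronecker

section Helpers

private lemma vmv_mul {k : Type*} [Fintype k] (x y : k → ℝ) (M : Matrix k k ℝ) :
    vecMulVec x y * M = vecMulVec x (y ᵥ* M) := by
  ext a b
  simp [mul_apply, vecMulVec_apply, vecMul, dotProduct, Finset.mul_sum, mul_assoc]

private lemma vmv_mul_vmv {k : Type*} [Fintype k] (x y z w : k → ℝ) :
    vecMulVec x y * vecMulVec z w = (y ⬝ᵥ z) • vecMulVec x w := by
  ext a b
  simp only [mul_apply, vecMulVec_apply, Matrix.smul_apply, dotProduct, smul_eq_mul,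
    Finset.sum_mul]
  exact Finset.sum_congr rfl fun c _ => by ring

private lemma vmv_trace {k : Type*} [Fintype k] (x y : k → ℝ) :
    (vecMulVec x y).trace = y ⬝ᵥ x := by
  simp [trace, diag, vecMulVec_apply, dotProduct, mul_comm]

private lemma rank1 {k : Type*} [Fintype k] (w1 w1' w2 w2' : k → ℝ) (A Y : Matrix k k ℝ) :
    (vecMulVec w1 w1' * A * vecMulVec w2 w2' * Y).trace
      = ((w1' ᵥ* A) ⬝ᵥ w2) * ((w2' ᵥ* Y) ⬝ᵥ w1) := by
  rw [vmv_mul, vmv_mul_vmv, smul_mul_assoc, vmv_mul, trace_smul, vmv_trace, smul_eq_mul]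

end Helpers

/-- The symmetrized unit matrix `E^{rs}` with entries `(E^{rs})_{ij} = ½(δ_{ri}δ_{sj} + δ_{si}δ_{rj})`. -/
noncomputable def symUnit (m : ℕ) (r s : Fin m) : Matrix (Fin m) (Fin m) ℝ :=
  Matrix.of fun i j =>
    (1 / 2 : ℝ) * ((if r = i ∧ s = j then 1 else 0) + (if s = i ∧ r = j then 1 else 0))

/-- The `(r, s)` block of a matrix indexed by pairs `(a, r)`. -/
def blk {n m : ℕ} (M : Matrix (Fin n × Fin m) (Fin n × Fin m) ℝ) (r s : Fin m) :
    Matrix (Fin n) (Fin n) ℝ :=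
  Matrix.of fun a b => M (a, r) (b, s)

private lemma hsym (n m : ℕ) (v : Fin n → ℝ) (r s : Fin m) :
    vecMulVec v v ⊗ₖ symUnit m r s
      = (1/2 : ℝ) • (vecMulVec v v ⊗ₖ Matrix.single r s 1
          + vecMulVec v v ⊗ₖ Matrix.single s r 1) := by
  ext ⟨a, i⟩ ⟨b, j⟩
  simp [symUnit, Matrix.single, kroneckerMap_apply, vecMulVec_apply, mul_ite, ite_mul]
  split_ifs <;> ring

private lemma hK (n m : ℕ) (v : Fin n → ℝ) (r s : Fin m) :
    vecMulVec v v ⊗ₖ Matrix.single r s (1 : ℝ)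
      = vecMulVec (fun p => v p.1 * (Pi.single r 1 : Fin m → ℝ) p.2)
          (fun p => v p.1 * (Pi.single s 1 : Fin m → ℝ) p.2) := by
  ext ⟨a, i⟩ ⟨b, j⟩
  simp [Matrix.single, kroneckerMap_apply, vecMulVec_apply, Pi.single_apply,
    ite_and, eq_comm]
  split <;> split <;> simp

private lemma pairing (n m : ℕ) (v w : Fin n → ℝ) (s r : Fin m)
    (A : Matrix (Fin n × Fin m) (Fin n × Fin m) ℝ) :
    (((fun p => v p.1 * (Pi.single s 1 : Fin m → ℝ) p.2) ᵥ* A)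
        ⬝ᵥ (fun p => w p.1 * (Pi.single r 1 : Fin m → ℝ) p.2))
      = v ⬝ᵥ (blk A s r).mulVec w := by
  simp [vecMul, dotProduct, mulVec, blk, Fintype.sum_prod_type, Pi.single_apply,
    Finset.sum_mul, Finset.mul_sum, mul_ite, ite_mul, mul_comm, mul_left_comm]
  rw [Finset.sum_comm]

/-- The Schur complement pairing formula:
`Tr((v₁v₁ᵀ ⊗ E^{r₁s₁}) A (v₂v₂ᵀ ⊗ E^{r₂s₂}) Y)` equals a quarter of the sum of four
products of bilinear pairings of blocks of `A` and `Y`. -/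
theorem trace_kronecker_symUnit_pairing
    (n m : ℕ) (v₁ v₂ : Fin n → ℝ)
    (A Y : Matrix (Fin n × Fin m) (Fin n × Fin m) ℝ)
    (r₁ s₁ r₂ s₂ : Fin m) :
    ((Matrix.vecMulVec v₁ v₁ ⊗ₖ symUnit m r₁ s₁) * A *
        (Matrix.vecMulVec v₂ v₂ ⊗ₖ symUnit m r₂ s₂) * Y).trace =
      (1 / 4 : ℝ) *
        ((v₁ ⬝ᵥ (blk A s₁ r₂).mulVec v₂) * (v₂ ⬝ᵥ (blk Y s₂ r₁).mulVec v₁) +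
         (v₁ ⬝ᵥ (blk A r₁ r₂).mulVec v₂) * (v₂ ⬝ᵥ (blk Y s₂ s₁).mulVec v₁) +
         (v₁ ⬝ᵥ (blk A s₁ s₂).mulVec v₂) * (v₂ ⬝ᵥ (blk Y r₂ r₁).mulVec v₁) +
         (v₁ ⬝ᵥ (blk A r₁ s₂).mulVec v₂) * (v₂ ⬝ᵥ (blk Y r₂ s₁).mulVec v₁)) := by
  simp only [hsym, hK]
  simp only [smul_mul_assoc, mul_smul_comm, add_mul, mul_add, trace_smul, trace_add,
    smul_eq_mul, rank1, pairing]
  ring
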